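/- Let S be a left-cancellative left-amenable semigroup, F = (F_j)_{j∈J} a Følner net for S, and A a finite set. If τ : A^S → A^S is a cellular automaton and X ⊆ A^S, then ent_F(τ(X)) ≤ ent_F(X), i.e., cellular automata do not increase entropy. -/

import Mathlib

open Filter Finset Set


lemma proj_image_card_le {S A : Type*} [Semigroup S] [Fintype A] {M : Finset S}
    {μ : (M → A) → A} {τ : (S → A) → (S → A)}
    (hμ : ∀ (x : S → A) (s : S), τ x s = μ (fun m => x (↑m * s)))
    {Ω F : Finset S} (hΩ : ∀ m ∈ M, ∀ t ∈ F, m * t ∈ Ω) (X : Set (S → A)) :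
    Nat.card ((fun (x : S → A) (t : F) => x ↑t) '' (τ '' X))
      ≤ Nat.card ((fun (x : S → A) (t : Ω) => x ↑t) '' X) := by
  classical
  have h : ((fun (x : S → A) (t : F) => x ↑t) '' (τ '' X))
      = (fun (y : Ω → A) (t : F) => μ (fun m => y ⟨↑m * ↑t, hΩ m m.2 t t.2⟩)) ''
        ((fun (x : S → A) (t : Ω) => x ↑t) '' X) := by
    rw [Set.image_image, Set.image_image]
    apply Set.image_congr
    intro x _
    funext t
    exact hμ x t
  rw [h, Nat.card_coe_set_eq, Nat.card_coe_set_eq]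
  exact Set.ncard_image_le (Set.toFinite _)

lemma proj_card_le_mul {S A : Type*} [DecidableEq S] [Fintype A] {Ω F : Finset S}
    (hsub : F ⊆ Ω) (X : Set (S → A)) :
    Nat.card ((fun (x : S → A) (t : Ω) => x ↑t) '' X)
      ≤ Nat.card ((fun (x : S → A) (t : F) => x ↑t) '' X)
        * Fintype.card A ^ (Ω \ F).card := by
  classical
  set PF : Set (F → A) := (fun (x : S → A) (t : F) => x ↑t) '' X with hPF
  set PΩ : Set (Ω → A) := (fun (x : S → A) (t : Ω) => x ↑t) '' X with hPΩ
  have hmem : ∀ y : PΩ, (fun t : F => (y : Ω → A) ⟨↑t, hsub t.2⟩) ∈ PF := by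
    rintro ⟨y, x, hx, rfl⟩
    exact ⟨x, hx, rfl⟩
  set Φ : PΩ → PF × (((Ω \ F : Finset S)) → A) :=
    fun y => (⟨fun t : F => (y : Ω → A) ⟨↑t, hsub t.2⟩, hmem y⟩,
      fun t => (y : Ω → A) ⟨↑t, Finset.sdiff_subset t.2⟩) with hΦ
  have hinj : Function.Injective Φ := by
    rintro ⟨y, hy⟩ ⟨z, hz⟩ h
    have h1 := congrArg Prod.fst h
    have h2 := congrArg Prod.snd h
    ext ⟨s, hs⟩
    by_cases hsF : s ∈ F
    · exact congrFun (congrArg Subtype.val h1) ⟨s, hsF⟩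
    · exact congrFun h2 ⟨s, Finset.mem_sdiff.2 ⟨hs, hsF⟩⟩
  calc Nat.card PΩ ≤ Nat.card (PF × (((Ω \ F : Finset S)) → A)) :=
        Nat.card_le_card_of_injective Φ hinj
    _ = Nat.card PF * Fintype.card A ^ (Ω \ F).card := by
        rw [Nat.card_prod, Nat.card_fun, Nat.card_eq_finsetCard,
          Nat.card_eq_fintype_card (α := A)]



/-- The entropy of a set of configurations `X ⊆ A^S` with respect to the net `F`:
`ent F X = limsup_j log|π_{F_j}(X)| / |F_j|`. -/
noncomputable def ent {S A J : Type*} [Preorder J] (F : J → Finset S)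
    (X : Set (S → A)) : ℝ :=
  Filter.limsup
    (fun j => Real.log (Nat.card ((fun (x : S → A) (t : F j) => x ↑t) '' X)) / (F j).card)
    Filter.atTop

/-- Cellular automata over a left-cancellative semigroup with a Følner net do not
increase entropy: `ent F (τ(X)) ≤ ent F X`. -/
theorem entropy_image_le {S A J : Type*} [Semigroup S] [Fintype A] [DecidableEq S]
    [SemilatticeSup J] [Nonempty J]
    (hlc : ∀ s : S, Function.Injective (fun t : S => s * t))
    (F : J → Finset S) (hFne : ∀ j, (F j).Nonempty)
    (hFol : ∀ s : S, Filter.Tendsto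
      (fun j => ((((F j).image (fun t : S => s * t)) \ F j).card : ℝ) / (F j).card)
      Filter.atTop (nhds 0))
    (τ : (S → A) → (S → A))
    (hτ : ∃ (M : Finset S) (μ : (M → A) → A),
      ∀ (x : S → A) (s : S), τ x s = μ (fun m => x (↑m * s)))
    (X : Set (S → A)) :
    ent F (τ '' X) ≤ ent F X := by
  classical
  obtain ⟨M, μ, hμ⟩ := hτ
  rcases X.eq_empty_or_nonempty with rfl | ⟨x₀, hx₀⟩
  · rw [Set.image_empty]
  set k := Fintype.card A with hkdef
  -- the enlarged windows
  set Ω : J → Finset S := fun j => M.biUnion (fun m => (F j).image (fun t => m * t)) ∪ F j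
    with hΩdef
  have hsub : ∀ j, F j ⊆ Ω j := fun j => Finset.subset_union_right
  have hΩmem : ∀ j, ∀ m ∈ M, ∀ t ∈ F j, m * t ∈ Ω j := by
    intro j m hm t ht
    exact Finset.mem_union_left _ (Finset.mem_biUnion.2 ⟨m, hm,
      Finset.mem_image.2 ⟨t, ht, rfl⟩⟩)
  have hnpos : ∀ j, (0 : ℝ) < ((F j).card : ℝ) := fun j => by
    exact_mod_cast (hFne j).card_pos
  set a : J → ℕ := fun j => Nat.card ((fun (x : S → A) (t : F j) => x ↑t) '' (τ '' X)) with ha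
  set b : J → ℕ := fun j => Nat.card ((fun (x : S → A) (t : F j) => x ↑t) '' X) with hb
  set c : J → ℕ := fun j => (Ω j \ F j).card with hc
  have ha1 : ∀ j, 1 ≤ a j := by
    intro j
    have : Nonempty ((fun (x : S → A) (t : F j) => x ↑t) '' (τ '' X)) :=
      ⟨⟨_, τ x₀, ⟨x₀, hx₀, rfl⟩, rfl⟩⟩
    exact Nat.card_pos
  have hb1 : ∀ j, 1 ≤ b j := by
    intro j
    have : Nonempty ((fun (x : S → A) (t : F j) => x ↑t) '' X) := ⟨⟨_, x₀, hx₀, rfl⟩⟩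
    exact Nat.card_pos
  have hk1 : 1 ≤ k := by
    have : Nonempty A := ⟨x₀ (hFne (Classical.arbitrary J)).choose⟩
    exact Fintype.card_pos
  -- the main counting estimate
  have hcount : ∀ j, a j ≤ b j * k ^ c j := fun j =>
    (proj_image_card_le hμ (hΩmem j) X).trans (proj_card_le_mul (hsub j) X)
  -- the pointwise log estimate
  set f : J → ℝ := fun j =>
    Real.log (Nat.card ((fun (x : S → A) (t : F j) => x ↑t) '' (τ '' X))) / (F j).card with hf
  set g : J → ℝ := fun j =>
    Real.log (Nat.card ((fun (x : S → A) (t : F j) => x ↑t) '' X)) / (F j).card with hg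
  have key : ∀ j, f j ≤ g j + ((c j : ℝ) / ((F j).card : ℝ)) * Real.log k := by
    intro j
    have hlog : Real.log (a j) ≤ Real.log (b j) + (c j : ℝ) * Real.log k := by
      have h1 : Real.log (a j) ≤ Real.log ((b j : ℝ) * (k : ℝ) ^ c j) := by
        apply Real.log_le_log (by exact_mod_cast ha1 j)
        exact_mod_cast hcount j
      rwa [Real.log_mul (Nat.cast_ne_zero.2 (Nat.one_le_iff_ne_zero.1 (hb1 j)))
        (by positivity), Real.log_pow] at h1
    have h2 : Real.log (a j) / ((F j).card : ℝ)
        ≤ (Real.log (b j) + (c j : ℝ) * Real.log k) / ((F j).card : ℝ) := by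
      gcongr
    refine h2.trans_eq ?_
    rw [add_div]
    ring
  -- bounds on f and g
  have hf0 : ∀ j, 0 ≤ f j := fun j =>
    div_nonneg (Real.log_nonneg (by exact_mod_cast ha1 j)) (hnpos j).le
  have hg0 : ∀ j, 0 ≤ g j := fun j =>
    div_nonneg (Real.log_nonneg (by exact_mod_cast hb1 j)) (hnpos j).le
  have hgk : ∀ j, g j ≤ Real.log k := by
    intro j
    have hbk : b j ≤ k ^ (F j).card := by
      have h1 : b j ≤ Nat.card (↥(F j) → A) :=
        Nat.card_le_card_of_injective
          (Subtype.val : ((fun (x : S → A) (t : F j) => x ↑t) '' X) → (↥(F j) → A))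
          Subtype.val_injective
      rwa [Nat.card_fun, Nat.card_eq_finsetCard, Nat.card_eq_fintype_card (α := A)] at h1
    have h2 : Real.log (b j) ≤ ((F j).card : ℝ) * Real.log k := by
      have := Real.log_le_log (by exact_mod_cast hb1 j)
        (show (b j : ℝ) ≤ ((k : ℝ)) ^ (F j).card by exact_mod_cast hbk)
      rwa [Real.log_pow] at this
    rw [hg]
    rw [div_le_iff₀ (hnpos j)]
    calc Real.log (b j) ≤ ((F j).card : ℝ) * Real.log k := h2
      _ = Real.log k * ((F j).card : ℝ) := by ring
  -- the error term tends to zero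
  have hcsum : ∀ j, (c j : ℝ) ≤ ∑ m ∈ M, ((((F j).image (fun t => m * t)) \ F j).card : ℝ) := by
    intro j
    have hset : Ω j \ F j ⊆ M.biUnion (fun m => ((F j).image (fun t => m * t)) \ F j) := by
      intro s hs
      rw [Finset.mem_sdiff] at hs
      obtain ⟨hs1, hs2⟩ := hs
      rcases Finset.mem_union.1 hs1 with h | h
      · obtain ⟨m, hm, hms⟩ := Finset.mem_biUnion.1 h
        exact Finset.mem_biUnion.2 ⟨m, hm, Finset.mem_sdiff.2 ⟨hms, hs2⟩⟩
      · exact absurd h hs2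
    have h1 : c j ≤ ∑ m ∈ M, (((F j).image (fun t => m * t)) \ F j).card :=
      (Finset.card_le_card hset).trans (Finset.card_biUnion_le)
    exact_mod_cast h1
  have herr : Tendsto (fun j => ((c j : ℝ) / ((F j).card : ℝ)) * Real.log k) atTop (nhds 0) := by
    have hsum : Tendsto
        (fun j => ∑ m ∈ M, ((((F j).image (fun t => m * t)) \ F j).card : ℝ) / ((F j).card : ℝ))
        atTop (nhds 0) := by
      have := tendsto_finset_sum M (fun (m : S) (_ : m ∈ M) => hFol m)
      simpa using this
    have hcn : Tendsto (fun j => (c j : ℝ) / ((F j).card : ℝ)) atTop (nhds 0) := by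
      apply squeeze_zero (fun j => div_nonneg (by positivity) (hnpos j).le) ?_ hsum
      intro j
      rw [div_le_iff₀ (hnpos j)]
      calc (c j : ℝ) ≤ ∑ m ∈ M, ((((F j).image (fun t => m * t)) \ F j).card : ℝ) := hcsum j
        _ = (∑ m ∈ M, ((((F j).image (fun t => m * t)) \ F j).card : ℝ) / ((F j).card : ℝ))
            * ((F j).card : ℝ) := by
            rw [← Finset.sum_div, div_mul_cancel₀ _ (hnpos j).ne']
    have := hcn.mul_const (Real.log k)
    simpa using this
  -- conclude via the limsup
  refine le_of_forall_pos_le_add fun ε hε => ?_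
  have hev : ∀ᶠ j in atTop, f j ≤ g j + ε := by
    filter_upwards [herr.eventually_lt_const hε] with j hj
    exact (key j).trans (by linarith)
  calc ent F (τ '' X) = limsup f atTop := rfl
    _ ≤ limsup (fun j => g j + ε) atTop :=
        limsup_le_limsup hev ((isBoundedUnder_of ⟨0, hf0⟩).isCobounded_flip)
          (isBoundedUnder_of ⟨Real.log k + ε, fun j => add_le_add_left (hgk j) ε⟩)
    _ = limsup g atTop + ε := limsup_add_const atTop g ε
          (isBoundedUnder_of ⟨Real.log k, hgk⟩)
          ((isBoundedUnder_of ⟨0, hg0⟩).isCobounded_flip)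
    _ = ent F X + ε := rfl
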